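/- The twelve operators E_1,…,E_4, F_1,…,F_4, H_1,…,H_4 satisfy the Chevalley relations of the simple Lie algebra of type F_4: writing [P,Q] = P∘Q − Q∘P for operators on A and letting c be the 4×4 matrix with rows c_1 = (2,−1,0,0), c_2 = (−1,2,−1,0), c_3 = (0,−2,2,−1), c_4 = (0,0,−1,2), one has for all i, j ∈ {1,2,3,4}: [H_i, H_j] = 0, [H_i, E_j] = c_{ij}·E_j, [H_i, F_j] = −c_{ij}·F_j, [E_i, F_i] = −H_i, and [E_i, F_j] = 0 for i ≠ j. -/

import Mathlib

open MvPolynomial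

noncomputable section

/-- The polynomial algebra `A = ℂ[x_1, …, x_26]`. -/
abbrev A : Type := MvPolynomial (Fin 26) ℂ

/-- The variable `x_r` (1-indexed), `0` out of range. -/
def x (r : ℕ) : A :=
  if h : 1 ≤ r ∧ r ≤ 26 then X (⟨r - 1, by omega⟩ : Fin 26) else 0

/-- The partial derivative `∂_r` (1-indexed), `0` out of range. -/
def d (r : ℕ) (f : A) : A :=
  if h : 1 ≤ r ∧ r ≤ 26 then pderiv (⟨r - 1, by omega⟩ : Fin 26) f else 0

/-- Simple positive root vector actions. -/
def E1 (f : A) : A :=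
  x 4 * d 6 f + x 5 * d 8 f + x 7 * d 9 f - x 18 * d 20 f - x 19 * d 22 f - x 21 * d 23 f

def E2 (f : A) : A :=
  x 3 * d 4 f + x 8 * d 10 f + x 9 * d 11 f - x 16 * d 18 f - x 17 * d 19 f - x 23 * d 24 f

def E3 (f : A) : A :=
  -x 2 * d 3 f - x 4 * d 5 f - x 6 * d 8 f + x 10 * d 12 f + x 11 * (d 13 f - 2 * d 14 f)
    - x 14 * d 16 f - x 15 * d 17 f + x 19 * d 21 f + x 22 * d 23 f + x 24 * d 25 f

def E4 (f : A) : A :=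
  -x 1 * d 2 f - x 5 * d 7 f - x 8 * d 9 f - x 10 * d 11 f + x 12 * (d 14 f - 2 * d 13 f)
    - x 13 * d 15 f + x 16 * d 17 f + x 18 * d 19 f + x 20 * d 22 f + x 25 * d 26 f

/-- Simple negative root vector actions. -/
def F1 (f : A) : A :=
  -x 6 * d 4 f - x 8 * d 5 f - x 9 * d 7 f + x 20 * d 18 f + x 22 * d 19 f + x 23 * d 21 f

def F2 (f : A) : A :=
  -x 4 * d 3 f - x 10 * d 8 f - x 11 * d 9 f + x 18 * d 16 f + x 19 * d 17 f + x 24 * d 23 f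

def F3 (f : A) : A :=
  x 3 * d 2 f + x 5 * d 4 f + x 8 * d 6 f - x 12 * d 10 f + x 14 * d 11 f
    + x 16 * (2 * d 14 f - d 13 f) + x 17 * d 15 f - x 21 * d 19 f - x 23 * d 22 f
    - x 25 * d 24 f

def F4 (f : A) : A :=
  x 2 * d 1 f + x 7 * d 5 f + x 9 * d 8 f + x 11 * d 10 f + x 13 * d 12 f
    + x 15 * (2 * d 13 f - d 14 f) - x 17 * d 16 f - x 19 * d 18 f - x 22 * d 20 f
    - x 26 * d 25 f

/-- Cartan subalgebra basis actions. -/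
def H1 (f : A) : A :=
  x 4 * d 4 f + x 5 * d 5 f - x 6 * d 6 f + x 7 * d 7 f - x 8 * d 8 f - x 9 * d 9 f
    + x 18 * d 18 f + x 19 * d 19 f - x 20 * d 20 f + x 21 * d 21 f - x 22 * d 22 f
    - x 23 * d 23 f

def H2 (f : A) : A :=
  x 3 * d 3 f - x 4 * d 4 f + x 8 * d 8 f + x 9 * d 9 f - x 10 * d 10 f - x 11 * d 11 f
    + x 16 * d 16 f + x 17 * d 17 f - x 18 * d 18 f - x 19 * d 19 f + x 23 * d 23 f
    - x 24 * d 24 f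

def H3 (f : A) : A :=
  x 2 * d 2 f - x 3 * d 3 f + x 4 * d 4 f - x 5 * d 5 f + x 6 * d 6 f - x 8 * d 8 f
    + x 10 * d 10 f + 2 * x 11 * d 11 f - x 12 * d 12 f + x 15 * d 15 f
    - 2 * x 16 * d 16 f - x 17 * d 17 f + x 19 * d 19 f - x 21 * d 21 f + x 22 * d 22 f
    - x 23 * d 23 f + x 24 * d 24 f - x 25 * d 25 f

def H4 (f : A) : A :=
  x 1 * d 1 f - x 2 * d 2 f + x 5 * d 5 f - x 7 * d 7 f + x 8 * d 8 f - x 9 * d 9 f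
    + x 10 * d 10 f - x 11 * d 11 f + 2 * x 12 * d 12 f - 2 * x 15 * d 15 f
    + x 16 * d 16 f - x 17 * d 17 f + x 18 * d 18 f - x 19 * d 19 f + x 20 * d 20 f
    - x 22 * d 22 f + x 25 * d 25 f - x 26 * d 26 f

/-- The singular vector `ζ_1`. -/
def zeta1 : A :=
  x 1 * (2 * x 13 + x 14) - 3 * x 2 * x 12 - 3 * x 3 * x 10 + 3 * x 4 * x 8
    - 3 * x 5 * x 6

/-- The singular vector `ϑ`. -/
def theta : A :=
  x 1 * (-(x 2 * x 13) + x 1 * x 15 - x 3 * x 11 + x 4 * x 9 - x 6 * x 7)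
    + x 2 * (x 2 * x 12 + x 3 * x 10 - x 4 * x 8 + x 5 * x 6)

/-- The quadratic invariant `η_1`. -/
def eta1 : A :=
  3 * ∑ r ∈ Finset.Icc 1 12, x r * x (27 - r) - x 13 ^ 2 - x 13 * x 14 - x 14 ^ 2

def zeta2 : A := F4 zeta1
def zeta3 : A := F3 zeta2
def zeta4 : A := -F2 zeta3
def zeta5 : A := F3 zeta4
def zeta6 : A := -F1 zeta4
def zeta7 : A := F4 zeta5
def zeta8 : A := -F1 zeta5
def zeta9 : A := -F1 zeta7
def zeta10 : A := -F2 zeta8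
def zeta11 : A := -F2 zeta9
def zeta12 : A := -F3 zeta10
def zeta13 : A := F4 zeta12
def zeta14 : A := F3 zeta11

/-- The algebra automorphism `τ` with `τ(x_r) = x_{27-r}` for `r ∉ {13,14}`,
`τ(x_13) = -x_13`, `τ(x_14) = -x_14` (0-indexed internally). -/
def tau : A →ₐ[ℂ] A :=
  aeval (fun i : Fin 26 =>
    if i.val = 12 then -X (⟨12, by omega⟩ : Fin 26)
    else if i.val = 13 then -X (⟨13, by omega⟩ : Fin 26)
    else X (⟨25 - i.val, by omega⟩ : Fin 26))

/-- The family `ζ_r`, `1 ≤ r ≤ 26` (`0` out of range). -/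
def zeta : ℕ → A := fun r =>
  match r with
  | 1 => zeta1 | 2 => zeta2 | 3 => zeta3 | 4 => zeta4 | 5 => zeta5 | 6 => zeta6
  | 7 => zeta7 | 8 => zeta8 | 9 => zeta9 | 10 => zeta10 | 11 => zeta11
  | 12 => zeta12 | 13 => zeta13 | 14 => zeta14
  | 15 => tau zeta12 | 16 => tau zeta11 | 17 => tau zeta10 | 18 => tau zeta9
  | 19 => tau zeta8 | 20 => tau zeta7 | 21 => tau zeta6 | 22 => tau zeta5
  | 23 => tau zeta4 | 24 => tau zeta3 | 25 => tau zeta2 | 26 => tau zeta1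
  | _ => 0

/-- The cubic invariant `η_2`. -/
def eta2 : A :=
  3 * ∑ r ∈ Finset.Icc 1 12, (zeta r * x (27 - r) + x r * zeta (27 - r))
    - 2 * x 13 * zeta 13 - x 13 * zeta 14 - x 14 * zeta 13 - 2 * x 14 * zeta 14

/-- The `F_4`-invariant Laplace operator `Δ`. -/
def Lap (f : A) : A :=
  3 * ∑ r ∈ Finset.Icc 1 12, d r (d (27 - r) f) - d 13 (d 13 f) - d 13 (d 14 f)
    - d 14 (d 14 f)

/-- The simple root vector operators, collected into families. -/
def Eop : Fin 4 → A → A := ![E1, E2, E3, E4]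
def Fop : Fin 4 → A → A := ![F1, F2, F3, F4]
def Hop : Fin 4 → A → A := ![H1, H2, H3, H4]

/-- The Cartan matrix of `F_4` (rows as in the statement). -/
def c : Matrix (Fin 4) (Fin 4) ℤ :=
  !![2, -1, 0, 0; -1, 2, -1, 0; 0, -2, 2, -1; 0, 0, -1, 2]

theorem derivation_apply_sum (D : Derivation ℂ A A) (f : A) :
    D f = ∑ i : Fin 26, pderiv i f * D (X i) := by
  induction f using MvPolynomial.induction_on with
  | C a => simp
  | add p q hp hq => simp [hp, hq, add_mul, Finset.sum_add_distrib]
  | mul_X p n ih =>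
      have h2 : ∑ i : Fin 26, (p * (Pi.single i (1 : A) : Fin 26 → A) n) * D (X i) = p * D (X n) := by
        rw [Finset.sum_eq_single n]
        · simp
        · intro b _ hb
          simp [Pi.single_eq_of_ne (Ne.symm hb)]
        · simp
      have h1 : D (p * X n) = p * D (X n) + X n * D p := by
        rw [Derivation.leibniz]; simp [smul_eq_mul]; try ring
      rw [h1]
      have h3 : ∀ i : Fin 26, pderiv i (p * X n) * D (X i)
          = (pderiv i p * D (X i)) * X n + (p * (Pi.single i (1 : A) : Fin 26 → A) n) * D (X i) := by
        intro i
        rw [pderiv_mul, pderiv_X]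
        ring
      rw [Finset.sum_congr rfl (fun i _ => h3 i), Finset.sum_add_distrib, h2,
        ← Finset.sum_mul, ← ih]
      ring

theorem dx_val (D : Derivation ℂ A A) (f : A) (i : Fin 26) :
    d (i.val + 1) f * D (x (i.val + 1)) = pderiv i f * D (X i) := by
  have h : 1 ≤ i.val + 1 ∧ i.val + 1 ≤ 26 := by omega
  have hd : d (i.val + 1) f = pderiv i f := by
    simp only [d, dif_pos h]
    congr 1
  have hx : x (i.val + 1) = X i := by
    simp only [x, dif_pos h]
    congr 1
  rw [hd, hx]

theorem derivation_apply (D : Derivation ℂ A A) (f : A) :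
    D f = d 1 f * D (x 1) + d 2 f * D (x 2) + d 3 f * D (x 3) + d 4 f * D (x 4)
      + d 5 f * D (x 5) + d 6 f * D (x 6) + d 7 f * D (x 7) + d 8 f * D (x 8)
      + d 9 f * D (x 9) + d 10 f * D (x 10) + d 11 f * D (x 11) + d 12 f * D (x 12)
      + d 13 f * D (x 13) + d 14 f * D (x 14) + d 15 f * D (x 15) + d 16 f * D (x 16)
      + d 17 f * D (x 17) + d 18 f * D (x 18) + d 19 f * D (x 19) + d 20 f * D (x 20)
      + d 21 f * D (x 21) + d 22 f * D (x 22) + d 23 f * D (x 23) + d 24 f * D (x 24)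
      + d 25 f * D (x 25) + d 26 f * D (x 26) := by
  rw [derivation_apply_sum]
  rw [show ∑ i : Fin 26, pderiv i f * D (X i)
      = ∑ i : Fin 26, (fun r : ℕ => d (r + 1) f * D (x (r + 1))) i.val from
    Finset.sum_congr rfl (fun i _ => (dx_val D f i).symm)]
  rw [Fin.sum_univ_eq_sum_range (fun r : ℕ => d (r + 1) f * D (x (r + 1))) 26]
  simp only [Finset.sum_range_succ, Finset.sum_range_zero]
  norm_num

def wE1 : ℕ → A
  | 6 => x 4
  | 8 => x 5
  | 9 => x 7
  | 20 => -x 18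
  | 22 => -x 19
  | 23 => -x 21
  | _ => 0
def DE1 : Derivation ℂ A A := mkDerivation ℂ (fun i => wE1 (i.val + 1))
def wE2 : ℕ → A
  | 4 => x 3
  | 10 => x 8
  | 11 => x 9
  | 18 => -x 16
  | 19 => -x 17
  | 24 => -x 23
  | _ => 0
def DE2 : Derivation ℂ A A := mkDerivation ℂ (fun i => wE2 (i.val + 1))
def wE3 : ℕ → A
  | 3 => -x 2
  | 5 => -x 4
  | 8 => -x 6
  | 12 => x 10
  | 13 => x 11
  | 14 => -(2 * x 11)
  | 16 => -x 14
  | 17 => -x 15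
  | 21 => x 19
  | 23 => x 22
  | 25 => x 24
  | _ => 0
def DE3 : Derivation ℂ A A := mkDerivation ℂ (fun i => wE3 (i.val + 1))
def wE4 : ℕ → A
  | 2 => -x 1
  | 7 => -x 5
  | 9 => -x 8
  | 11 => -x 10
  | 14 => x 12
  | 13 => -(2 * x 12)
  | 15 => -x 13
  | 17 => x 16
  | 19 => x 18
  | 22 => x 20
  | 26 => x 25
  | _ => 0
def DE4 : Derivation ℂ A A := mkDerivation ℂ (fun i => wE4 (i.val + 1))
def wF1 : ℕ → A
  | 4 => -x 6
  | 5 => -x 8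
  | 7 => -x 9
  | 18 => x 20
  | 19 => x 22
  | 21 => x 23
  | _ => 0
def DF1 : Derivation ℂ A A := mkDerivation ℂ (fun i => wF1 (i.val + 1))
def wF2 : ℕ → A
  | 3 => -x 4
  | 8 => -x 10
  | 9 => -x 11
  | 16 => x 18
  | 17 => x 19
  | 23 => x 24
  | _ => 0
def DF2 : Derivation ℂ A A := mkDerivation ℂ (fun i => wF2 (i.val + 1))
def wF3 : ℕ → A
  | 2 => x 3
  | 4 => x 5
  | 6 => x 8
  | 10 => -x 12
  | 11 => x 14
  | 14 => 2 * x 16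
  | 13 => -x 16
  | 15 => x 17
  | 19 => -x 21
  | 22 => -x 23
  | 24 => -x 25
  | _ => 0
def DF3 : Derivation ℂ A A := mkDerivation ℂ (fun i => wF3 (i.val + 1))
def wF4 : ℕ → A
  | 1 => x 2
  | 5 => x 7
  | 8 => x 9
  | 10 => x 11
  | 12 => x 13
  | 13 => 2 * x 15
  | 14 => -x 15
  | 16 => -x 17
  | 18 => -x 19
  | 20 => -x 22
  | 25 => -x 26
  | _ => 0
def DF4 : Derivation ℂ A A := mkDerivation ℂ (fun i => wF4 (i.val + 1))
def wH1 : ℕ → A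
  | 4 => x 4
  | 5 => x 5
  | 6 => -x 6
  | 7 => x 7
  | 8 => -x 8
  | 9 => -x 9
  | 18 => x 18
  | 19 => x 19
  | 20 => -x 20
  | 21 => x 21
  | 22 => -x 22
  | 23 => -x 23
  | _ => 0
def DH1 : Derivation ℂ A A := mkDerivation ℂ (fun i => wH1 (i.val + 1))
def wH2 : ℕ → A
  | 3 => x 3
  | 4 => -x 4
  | 8 => x 8
  | 9 => x 9
  | 10 => -x 10
  | 11 => -x 11
  | 16 => x 16
  | 17 => x 17
  | 18 => -x 18
  | 19 => -x 19
  | 23 => x 23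
  | 24 => -x 24
  | _ => 0
def DH2 : Derivation ℂ A A := mkDerivation ℂ (fun i => wH2 (i.val + 1))
def wH3 : ℕ → A
  | 2 => x 2
  | 3 => -x 3
  | 4 => x 4
  | 5 => -x 5
  | 6 => x 6
  | 8 => -x 8
  | 10 => x 10
  | 11 => 2 * x 11
  | 12 => -x 12
  | 15 => x 15
  | 16 => -(2 * x 16)
  | 17 => -x 17
  | 19 => x 19
  | 21 => -x 21
  | 22 => x 22
  | 23 => -x 23
  | 24 => x 24
  | 25 => -x 25
  | _ => 0
def DH3 : Derivation ℂ A A := mkDerivation ℂ (fun i => wH3 (i.val + 1))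
def wH4 : ℕ → A
  | 1 => x 1
  | 2 => -x 2
  | 5 => x 5
  | 7 => -x 7
  | 8 => x 8
  | 9 => -x 9
  | 10 => x 10
  | 11 => -x 11
  | 12 => 2 * x 12
  | 15 => -(2 * x 15)
  | 16 => x 16
  | 17 => -x 17
  | 18 => x 18
  | 19 => -x 19
  | 20 => x 20
  | 22 => -x 22
  | 25 => x 25
  | 26 => -x 26
  | _ => 0
def DH4 : Derivation ℂ A A := mkDerivation ℂ (fun i => wH4 (i.val + 1))

theorem mk_x (w : ℕ → A) (r : ℕ) (h : 1 ≤ r ∧ r ≤ 26) :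
    (mkDerivation ℂ (fun i : Fin 26 => w (i.val + 1))) (x r) = w r := by
  simp only [x, dif_pos h, mkDerivation_X]
  congr 1
  omega

theorem Dmul2 (D : Derivation ℂ A A) (p : A) : D (2 * p) = 2 * D p := by
  have h1 : (2 : A) * p = (2 : ℂ) • p := by
    rw [MvPolynomial.smul_eq_C_mul, map_ofNat]
  have h2 : (2 : A) * D p = (2 : ℂ) • D p := by
    rw [MvPolynomial.smul_eq_C_mul, map_ofNat]
  rw [h1, h2, Derivation.map_smul]

theorem Dtwo0 (D : Derivation ℂ A A) : D (2 : A) = 0 := by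
  have h : (2 : A) = (2 : ℂ) • (1 : A) := by
    rw [MvPolynomial.smul_eq_C_mul, map_ofNat]; ring
  rw [h, Derivation.map_smul, Derivation.map_one_eq_zero, smul_zero]

theorem brack (v w : Fin 26 → A) :
    ⁅mkDerivation ℂ v, mkDerivation ℂ w⁆
      = mkDerivation ℂ (fun i => (mkDerivation ℂ v) (w i) - (mkDerivation ℂ w) (v i)) := by
  apply MvPolynomial.derivation_ext
  intro i
  simp [Derivation.commutator_apply, mkDerivation_X]


theorem smul2 (p : A) : (2 : ℂ) • p = 2 * p := by
  rw [MvPolynomial.smul_eq_C_mul, map_ofNat]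

theorem derivation_eq_of_x (D1 D2 : Derivation ℂ A A)
    (h : ∀ r : ℕ, 1 ≤ r → r ≤ 26 → D1 (x r) = D2 (x r)) : D1 = D2 := by
  apply MvPolynomial.derivation_ext
  intro i
  have h2 := h (i.val + 1) (by omega) (by omega)
  have hx : x (i.val + 1) = X i := by
    simp only [x, dif_pos (show 1 ≤ i.val + 1 ∧ i.val + 1 ≤ 26 by omega)]
    congr 1
  rwa [hx] at h2

theorem DE1_x (r : ℕ) (h1 : 1 ≤ r) (h2 : r ≤ 26) : DE1 (x r) = wE1 r :=
  mk_x wE1 r ⟨h1, h2⟩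

theorem DE2_x (r : ℕ) (h1 : 1 ≤ r) (h2 : r ≤ 26) : DE2 (x r) = wE2 r :=
  mk_x wE2 r ⟨h1, h2⟩

theorem DE3_x (r : ℕ) (h1 : 1 ≤ r) (h2 : r ≤ 26) : DE3 (x r) = wE3 r :=
  mk_x wE3 r ⟨h1, h2⟩

theorem DE4_x (r : ℕ) (h1 : 1 ≤ r) (h2 : r ≤ 26) : DE4 (x r) = wE4 r :=
  mk_x wE4 r ⟨h1, h2⟩

theorem DF1_x (r : ℕ) (h1 : 1 ≤ r) (h2 : r ≤ 26) : DF1 (x r) = wF1 r :=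
  mk_x wF1 r ⟨h1, h2⟩

theorem DF2_x (r : ℕ) (h1 : 1 ≤ r) (h2 : r ≤ 26) : DF2 (x r) = wF2 r :=
  mk_x wF2 r ⟨h1, h2⟩

theorem DF3_x (r : ℕ) (h1 : 1 ≤ r) (h2 : r ≤ 26) : DF3 (x r) = wF3 r :=
  mk_x wF3 r ⟨h1, h2⟩

theorem DF4_x (r : ℕ) (h1 : 1 ≤ r) (h2 : r ≤ 26) : DF4 (x r) = wF4 r :=
  mk_x wF4 r ⟨h1, h2⟩

theorem DH1_x (r : ℕ) (h1 : 1 ≤ r) (h2 : r ≤ 26) : DH1 (x r) = wH1 r :=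
  mk_x wH1 r ⟨h1, h2⟩

theorem DH2_x (r : ℕ) (h1 : 1 ≤ r) (h2 : r ≤ 26) : DH2 (x r) = wH2 r :=
  mk_x wH2 r ⟨h1, h2⟩

theorem DH3_x (r : ℕ) (h1 : 1 ≤ r) (h2 : r ≤ 26) : DH3 (x r) = wH3 r :=
  mk_x wH3 r ⟨h1, h2⟩

theorem DH4_x (r : ℕ) (h1 : 1 ≤ r) (h2 : r ≤ 26) : DH4 (x r) = wH4 r :=
  mk_x wH4 r ⟨h1, h2⟩


set_option maxHeartbeats 2000000 in
theorem relH1H1 : ⁅DH1, DH1⁆ = 0 := by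
  apply derivation_eq_of_x
  intro r hr1 hr2
  interval_cases r <;>
    simp [Derivation.commutator_apply, Derivation.neg_apply, Derivation.smul_apply, Derivation.zero_apply, DH1_x, wH1, Dmul2, smul2, Dtwo0] <;> try ring

set_option maxHeartbeats 2000000 in
theorem relH1E1 : ⁅DH1, DE1⁆ = (2 : ℂ) • DE1 := by
  apply derivation_eq_of_x
  intro r hr1 hr2
  interval_cases r <;>
    simp [Derivation.commutator_apply, Derivation.neg_apply, Derivation.smul_apply, Derivation.zero_apply, DH1_x, DE1_x, wH1, wE1, Dmul2, smul2, Dtwo0] <;> try ring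

set_option maxHeartbeats 2000000 in
theorem relH1F1 : ⁅DH1, DF1⁆ = -((2 : ℂ) • DF1) := by
  apply derivation_eq_of_x
  intro r hr1 hr2
  interval_cases r <;>
    simp [Derivation.commutator_apply, Derivation.neg_apply, Derivation.smul_apply, Derivation.zero_apply, DH1_x, DF1_x, wH1, wF1, Dmul2, smul2, Dtwo0] <;> try ring

set_option maxHeartbeats 2000000 in
theorem relE1F1 : ⁅DE1, DF1⁆ = -DH1 := by
  apply derivation_eq_of_x
  intro r hr1 hr2
  interval_cases r <;>
    simp [Derivation.commutator_apply, Derivation.neg_apply, Derivation.smul_apply, Derivation.zero_apply, DE1_x, DF1_x, wE1, wF1, Dmul2, smul2, Dtwo0, DH1_x, wH1] <;> try ring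

set_option maxHeartbeats 2000000 in
theorem relH1H2 : ⁅DH1, DH2⁆ = 0 := by
  apply derivation_eq_of_x
  intro r hr1 hr2
  interval_cases r <;>
    simp [Derivation.commutator_apply, Derivation.neg_apply, Derivation.smul_apply, Derivation.zero_apply, DH1_x, DH2_x, wH1, wH2, Dmul2, smul2, Dtwo0] <;> try ring

set_option maxHeartbeats 2000000 in
theorem relH1E2 : ⁅DH1, DE2⁆ = -DE2 := by
  apply derivation_eq_of_x
  intro r hr1 hr2
  interval_cases r <;>
    simp [Derivation.commutator_apply, Derivation.neg_apply, Derivation.smul_apply, Derivation.zero_apply, DH1_x, DE2_x, wH1, wE2, Dmul2, smul2, Dtwo0] <;> try ring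

set_option maxHeartbeats 2000000 in
theorem relH1F2 : ⁅DH1, DF2⁆ = DF2 := by
  apply derivation_eq_of_x
  intro r hr1 hr2
  interval_cases r <;>
    simp [Derivation.commutator_apply, Derivation.neg_apply, Derivation.smul_apply, Derivation.zero_apply, DH1_x, DF2_x, wH1, wF2, Dmul2, smul2, Dtwo0] <;> try ring

set_option maxHeartbeats 2000000 in
theorem relE1F2 : ⁅DE1, DF2⁆ = 0 := by
  apply derivation_eq_of_x
  intro r hr1 hr2
  interval_cases r <;>
    simp [Derivation.commutator_apply, Derivation.neg_apply, Derivation.smul_apply, Derivation.zero_apply, DE1_x, DF2_x, wE1, wF2, Dmul2, smul2, Dtwo0] <;> try ring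

set_option maxHeartbeats 2000000 in
theorem relH1H3 : ⁅DH1, DH3⁆ = 0 := by
  apply derivation_eq_of_x
  intro r hr1 hr2
  interval_cases r <;>
    simp [Derivation.commutator_apply, Derivation.neg_apply, Derivation.smul_apply, Derivation.zero_apply, DH1_x, DH3_x, wH1, wH3, Dmul2, smul2, Dtwo0] <;> try ring

set_option maxHeartbeats 2000000 in
theorem relH1E3 : ⁅DH1, DE3⁆ = 0 := by
  apply derivation_eq_of_x
  intro r hr1 hr2
  interval_cases r <;>
    simp [Derivation.commutator_apply, Derivation.neg_apply, Derivation.smul_apply, Derivation.zero_apply, DH1_x, DE3_x, wH1, wE3, Dmul2, smul2, Dtwo0] <;> try ring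

set_option maxHeartbeats 2000000 in
theorem relH1F3 : ⁅DH1, DF3⁆ = 0 := by
  apply derivation_eq_of_x
  intro r hr1 hr2
  interval_cases r <;>
    simp [Derivation.commutator_apply, Derivation.neg_apply, Derivation.smul_apply, Derivation.zero_apply, DH1_x, DF3_x, wH1, wF3, Dmul2, smul2, Dtwo0] <;> try ring

set_option maxHeartbeats 2000000 in
theorem relE1F3 : ⁅DE1, DF3⁆ = 0 := by
  apply derivation_eq_of_x
  intro r hr1 hr2
  interval_cases r <;>
    simp [Derivation.commutator_apply, Derivation.neg_apply, Derivation.smul_apply, Derivation.zero_apply, DE1_x, DF3_x, wE1, wF3, Dmul2, smul2, Dtwo0] <;> try ring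

set_option maxHeartbeats 2000000 in
theorem relH1H4 : ⁅DH1, DH4⁆ = 0 := by
  apply derivation_eq_of_x
  intro r hr1 hr2
  interval_cases r <;>
    simp [Derivation.commutator_apply, Derivation.neg_apply, Derivation.smul_apply, Derivation.zero_apply, DH1_x, DH4_x, wH1, wH4, Dmul2, smul2, Dtwo0] <;> try ring

set_option maxHeartbeats 2000000 in
theorem relH1E4 : ⁅DH1, DE4⁆ = 0 := by
  apply derivation_eq_of_x
  intro r hr1 hr2
  interval_cases r <;>
    simp [Derivation.commutator_apply, Derivation.neg_apply, Derivation.smul_apply, Derivation.zero_apply, DH1_x, DE4_x, wH1, wE4, Dmul2, smul2, Dtwo0] <;> try ring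

set_option maxHeartbeats 2000000 in
theorem relH1F4 : ⁅DH1, DF4⁆ = 0 := by
  apply derivation_eq_of_x
  intro r hr1 hr2
  interval_cases r <;>
    simp [Derivation.commutator_apply, Derivation.neg_apply, Derivation.smul_apply, Derivation.zero_apply, DH1_x, DF4_x, wH1, wF4, Dmul2, smul2, Dtwo0] <;> try ring

set_option maxHeartbeats 2000000 in
theorem relE1F4 : ⁅DE1, DF4⁆ = 0 := by
  apply derivation_eq_of_x
  intro r hr1 hr2
  interval_cases r <;>
    simp [Derivation.commutator_apply, Derivation.neg_apply, Derivation.smul_apply, Derivation.zero_apply, DE1_x, DF4_x, wE1, wF4, Dmul2, smul2, Dtwo0] <;> try ring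

set_option maxHeartbeats 2000000 in
theorem relH2H1 : ⁅DH2, DH1⁆ = 0 := by
  apply derivation_eq_of_x
  intro r hr1 hr2
  interval_cases r <;>
    simp [Derivation.commutator_apply, Derivation.neg_apply, Derivation.smul_apply, Derivation.zero_apply, DH2_x, DH1_x, wH2, wH1, Dmul2, smul2, Dtwo0] <;> try ring

set_option maxHeartbeats 2000000 in
theorem relH2E1 : ⁅DH2, DE1⁆ = -DE1 := by
  apply derivation_eq_of_x
  intro r hr1 hr2
  interval_cases r <;>
    simp [Derivation.commutator_apply, Derivation.neg_apply, Derivation.smul_apply, Derivation.zero_apply, DH2_x, DE1_x, wH2, wE1, Dmul2, smul2, Dtwo0] <;> try ring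

set_option maxHeartbeats 2000000 in
theorem relH2F1 : ⁅DH2, DF1⁆ = DF1 := by
  apply derivation_eq_of_x
  intro r hr1 hr2
  interval_cases r <;>
    simp [Derivation.commutator_apply, Derivation.neg_apply, Derivation.smul_apply, Derivation.zero_apply, DH2_x, DF1_x, wH2, wF1, Dmul2, smul2, Dtwo0] <;> try ring

set_option maxHeartbeats 2000000 in
theorem relE2F1 : ⁅DE2, DF1⁆ = 0 := by
  apply derivation_eq_of_x
  intro r hr1 hr2
  interval_cases r <;>
    simp [Derivation.commutator_apply, Derivation.neg_apply, Derivation.smul_apply, Derivation.zero_apply, DE2_x, DF1_x, wE2, wF1, Dmul2, smul2, Dtwo0] <;> try ring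

set_option maxHeartbeats 2000000 in
theorem relH2H2 : ⁅DH2, DH2⁆ = 0 := by
  apply derivation_eq_of_x
  intro r hr1 hr2
  interval_cases r <;>
    simp [Derivation.commutator_apply, Derivation.neg_apply, Derivation.smul_apply, Derivation.zero_apply, DH2_x, wH2, Dmul2, smul2, Dtwo0] <;> try ring

set_option maxHeartbeats 2000000 in
theorem relH2E2 : ⁅DH2, DE2⁆ = (2 : ℂ) • DE2 := by
  apply derivation_eq_of_x
  intro r hr1 hr2
  interval_cases r <;>
    simp [Derivation.commutator_apply, Derivation.neg_apply, Derivation.smul_apply, Derivation.zero_apply, DH2_x, DE2_x, wH2, wE2, Dmul2, smul2, Dtwo0] <;> try ring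

set_option maxHeartbeats 2000000 in
theorem relH2F2 : ⁅DH2, DF2⁆ = -((2 : ℂ) • DF2) := by
  apply derivation_eq_of_x
  intro r hr1 hr2
  interval_cases r <;>
    simp [Derivation.commutator_apply, Derivation.neg_apply, Derivation.smul_apply, Derivation.zero_apply, DH2_x, DF2_x, wH2, wF2, Dmul2, smul2, Dtwo0] <;> try ring

set_option maxHeartbeats 2000000 in
theorem relE2F2 : ⁅DE2, DF2⁆ = -DH2 := by
  apply derivation_eq_of_x
  intro r hr1 hr2
  interval_cases r <;>
    simp [Derivation.commutator_apply, Derivation.neg_apply, Derivation.smul_apply, Derivation.zero_apply, DE2_x, DF2_x, wE2, wF2, Dmul2, smul2, Dtwo0, DH2_x, wH2] <;> try ring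

set_option maxHeartbeats 2000000 in
theorem relH2H3 : ⁅DH2, DH3⁆ = 0 := by
  apply derivation_eq_of_x
  intro r hr1 hr2
  interval_cases r <;>
    simp [Derivation.commutator_apply, Derivation.neg_apply, Derivation.smul_apply, Derivation.zero_apply, DH2_x, DH3_x, wH2, wH3, Dmul2, smul2, Dtwo0] <;> try ring

set_option maxHeartbeats 2000000 in
theorem relH2E3 : ⁅DH2, DE3⁆ = -DE3 := by
  apply derivation_eq_of_x
  intro r hr1 hr2
  interval_cases r <;>
    simp [Derivation.commutator_apply, Derivation.neg_apply, Derivation.smul_apply, Derivation.zero_apply, DH2_x, DE3_x, wH2, wE3, Dmul2, smul2, Dtwo0] <;> try ring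

set_option maxHeartbeats 2000000 in
theorem relH2F3 : ⁅DH2, DF3⁆ = DF3 := by
  apply derivation_eq_of_x
  intro r hr1 hr2
  interval_cases r <;>
    simp [Derivation.commutator_apply, Derivation.neg_apply, Derivation.smul_apply, Derivation.zero_apply, DH2_x, DF3_x, wH2, wF3, Dmul2, smul2, Dtwo0] <;> try ring

set_option maxHeartbeats 2000000 in
theorem relE2F3 : ⁅DE2, DF3⁆ = 0 := by
  apply derivation_eq_of_x
  intro r hr1 hr2
  interval_cases r <;>
    simp [Derivation.commutator_apply, Derivation.neg_apply, Derivation.smul_apply, Derivation.zero_apply, DE2_x, DF3_x, wE2, wF3, Dmul2, smul2, Dtwo0] <;> try ring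

set_option maxHeartbeats 2000000 in
theorem relH2H4 : ⁅DH2, DH4⁆ = 0 := by
  apply derivation_eq_of_x
  intro r hr1 hr2
  interval_cases r <;>
    simp [Derivation.commutator_apply, Derivation.neg_apply, Derivation.smul_apply, Derivation.zero_apply, DH2_x, DH4_x, wH2, wH4, Dmul2, smul2, Dtwo0] <;> try ring

set_option maxHeartbeats 2000000 in
theorem relH2E4 : ⁅DH2, DE4⁆ = 0 := by
  apply derivation_eq_of_x
  intro r hr1 hr2
  interval_cases r <;>
    simp [Derivation.commutator_apply, Derivation.neg_apply, Derivation.smul_apply, Derivation.zero_apply, DH2_x, DE4_x, wH2, wE4, Dmul2, smul2, Dtwo0] <;> try ring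

set_option maxHeartbeats 2000000 in
theorem relH2F4 : ⁅DH2, DF4⁆ = 0 := by
  apply derivation_eq_of_x
  intro r hr1 hr2
  interval_cases r <;>
    simp [Derivation.commutator_apply, Derivation.neg_apply, Derivation.smul_apply, Derivation.zero_apply, DH2_x, DF4_x, wH2, wF4, Dmul2, smul2, Dtwo0] <;> try ring

set_option maxHeartbeats 2000000 in
theorem relE2F4 : ⁅DE2, DF4⁆ = 0 := by
  apply derivation_eq_of_x
  intro r hr1 hr2
  interval_cases r <;>
    simp [Derivation.commutator_apply, Derivation.neg_apply, Derivation.smul_apply, Derivation.zero_apply, DE2_x, DF4_x, wE2, wF4, Dmul2, smul2, Dtwo0] <;> try ring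

set_option maxHeartbeats 2000000 in
theorem relH3H1 : ⁅DH3, DH1⁆ = 0 := by
  apply derivation_eq_of_x
  intro r hr1 hr2
  interval_cases r <;>
    simp [Derivation.commutator_apply, Derivation.neg_apply, Derivation.smul_apply, Derivation.zero_apply, DH3_x, DH1_x, wH3, wH1, Dmul2, smul2, Dtwo0] <;> try ring

set_option maxHeartbeats 2000000 in
theorem relH3E1 : ⁅DH3, DE1⁆ = 0 := by
  apply derivation_eq_of_x
  intro r hr1 hr2
  interval_cases r <;>
    simp [Derivation.commutator_apply, Derivation.neg_apply, Derivation.smul_apply, Derivation.zero_apply, DH3_x, DE1_x, wH3, wE1, Dmul2, smul2, Dtwo0] <;> try ring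

set_option maxHeartbeats 2000000 in
theorem relH3F1 : ⁅DH3, DF1⁆ = 0 := by
  apply derivation_eq_of_x
  intro r hr1 hr2
  interval_cases r <;>
    simp [Derivation.commutator_apply, Derivation.neg_apply, Derivation.smul_apply, Derivation.zero_apply, DH3_x, DF1_x, wH3, wF1, Dmul2, smul2, Dtwo0] <;> try ring

set_option maxHeartbeats 2000000 in
theorem relE3F1 : ⁅DE3, DF1⁆ = 0 := by
  apply derivation_eq_of_x
  intro r hr1 hr2
  interval_cases r <;>
    simp [Derivation.commutator_apply, Derivation.neg_apply, Derivation.smul_apply, Derivation.zero_apply, DE3_x, DF1_x, wE3, wF1, Dmul2, smul2, Dtwo0] <;> try ring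

set_option maxHeartbeats 2000000 in
theorem relH3H2 : ⁅DH3, DH2⁆ = 0 := by
  apply derivation_eq_of_x
  intro r hr1 hr2
  interval_cases r <;>
    simp [Derivation.commutator_apply, Derivation.neg_apply, Derivation.smul_apply, Derivation.zero_apply, DH3_x, DH2_x, wH3, wH2, Dmul2, smul2, Dtwo0] <;> try ring

set_option maxHeartbeats 2000000 in
theorem relH3E2 : ⁅DH3, DE2⁆ = -((2 : ℂ) • DE2) := by
  apply derivation_eq_of_x
  intro r hr1 hr2
  interval_cases r <;>
    simp [Derivation.commutator_apply, Derivation.neg_apply, Derivation.smul_apply, Derivation.zero_apply, DH3_x, DE2_x, wH3, wE2, Dmul2, smul2, Dtwo0] <;> try ring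

set_option maxHeartbeats 2000000 in
theorem relH3F2 : ⁅DH3, DF2⁆ = (2 : ℂ) • DF2 := by
  apply derivation_eq_of_x
  intro r hr1 hr2
  interval_cases r <;>
    simp [Derivation.commutator_apply, Derivation.neg_apply, Derivation.smul_apply, Derivation.zero_apply, DH3_x, DF2_x, wH3, wF2, Dmul2, smul2, Dtwo0] <;> try ring

set_option maxHeartbeats 2000000 in
theorem relE3F2 : ⁅DE3, DF2⁆ = 0 := by
  apply derivation_eq_of_x
  intro r hr1 hr2
  interval_cases r <;>
    simp [Derivation.commutator_apply, Derivation.neg_apply, Derivation.smul_apply, Derivation.zero_apply, DE3_x, DF2_x, wE3, wF2, Dmul2, smul2, Dtwo0] <;> try ring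

set_option maxHeartbeats 2000000 in
theorem relH3H3 : ⁅DH3, DH3⁆ = 0 := by
  apply derivation_eq_of_x
  intro r hr1 hr2
  interval_cases r <;>
    simp [Derivation.commutator_apply, Derivation.neg_apply, Derivation.smul_apply, Derivation.zero_apply, DH3_x, wH3, Dmul2, smul2, Dtwo0] <;> try ring

set_option maxHeartbeats 2000000 in
theorem relH3E3 : ⁅DH3, DE3⁆ = (2 : ℂ) • DE3 := by
  apply derivation_eq_of_x
  intro r hr1 hr2
  interval_cases r <;>
    simp [Derivation.commutator_apply, Derivation.neg_apply, Derivation.smul_apply, Derivation.zero_apply, DH3_x, DE3_x, wH3, wE3, Dmul2, smul2, Dtwo0] <;> try ring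

set_option maxHeartbeats 2000000 in
theorem relH3F3 : ⁅DH3, DF3⁆ = -((2 : ℂ) • DF3) := by
  apply derivation_eq_of_x
  intro r hr1 hr2
  interval_cases r <;>
    simp [Derivation.commutator_apply, Derivation.neg_apply, Derivation.smul_apply, Derivation.zero_apply, DH3_x, DF3_x, wH3, wF3, Dmul2, smul2, Dtwo0] <;> try ring

set_option maxHeartbeats 2000000 in
theorem relE3F3 : ⁅DE3, DF3⁆ = -DH3 := by
  apply derivation_eq_of_x
  intro r hr1 hr2
  interval_cases r <;>
    simp [Derivation.commutator_apply, Derivation.neg_apply, Derivation.smul_apply, Derivation.zero_apply, DE3_x, DF3_x, wE3, wF3, Dmul2, smul2, Dtwo0, DH3_x, wH3] <;> try ring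

set_option maxHeartbeats 2000000 in
theorem relH3H4 : ⁅DH3, DH4⁆ = 0 := by
  apply derivation_eq_of_x
  intro r hr1 hr2
  interval_cases r <;>
    simp [Derivation.commutator_apply, Derivation.neg_apply, Derivation.smul_apply, Derivation.zero_apply, DH3_x, DH4_x, wH3, wH4, Dmul2, smul2, Dtwo0] <;> try ring

set_option maxHeartbeats 2000000 in
theorem relH3E4 : ⁅DH3, DE4⁆ = -DE4 := by
  apply derivation_eq_of_x
  intro r hr1 hr2
  interval_cases r <;>
    simp [Derivation.commutator_apply, Derivation.neg_apply, Derivation.smul_apply, Derivation.zero_apply, DH3_x, DE4_x, wH3, wE4, Dmul2, smul2, Dtwo0] <;> try ring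

set_option maxHeartbeats 2000000 in
theorem relH3F4 : ⁅DH3, DF4⁆ = DF4 := by
  apply derivation_eq_of_x
  intro r hr1 hr2
  interval_cases r <;>
    simp [Derivation.commutator_apply, Derivation.neg_apply, Derivation.smul_apply, Derivation.zero_apply, DH3_x, DF4_x, wH3, wF4, Dmul2, smul2, Dtwo0] <;> try ring

set_option maxHeartbeats 2000000 in
theorem relE3F4 : ⁅DE3, DF4⁆ = 0 := by
  apply derivation_eq_of_x
  intro r hr1 hr2
  interval_cases r <;>
    simp [Derivation.commutator_apply, Derivation.neg_apply, Derivation.smul_apply, Derivation.zero_apply, DE3_x, DF4_x, wE3, wF4, Dmul2, smul2, Dtwo0] <;> try ring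

set_option maxHeartbeats 2000000 in
theorem relH4H1 : ⁅DH4, DH1⁆ = 0 := by
  apply derivation_eq_of_x
  intro r hr1 hr2
  interval_cases r <;>
    simp [Derivation.commutator_apply, Derivation.neg_apply, Derivation.smul_apply, Derivation.zero_apply, DH4_x, DH1_x, wH4, wH1, Dmul2, smul2, Dtwo0] <;> try ring

set_option maxHeartbeats 2000000 in
theorem relH4E1 : ⁅DH4, DE1⁆ = 0 := by
  apply derivation_eq_of_x
  intro r hr1 hr2
  interval_cases r <;>
    simp [Derivation.commutator_apply, Derivation.neg_apply, Derivation.smul_apply, Derivation.zero_apply, DH4_x, DE1_x, wH4, wE1, Dmul2, smul2, Dtwo0] <;> try ring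

set_option maxHeartbeats 2000000 in
theorem relH4F1 : ⁅DH4, DF1⁆ = 0 := by
  apply derivation_eq_of_x
  intro r hr1 hr2
  interval_cases r <;>
    simp [Derivation.commutator_apply, Derivation.neg_apply, Derivation.smul_apply, Derivation.zero_apply, DH4_x, DF1_x, wH4, wF1, Dmul2, smul2, Dtwo0] <;> try ring

set_option maxHeartbeats 2000000 in
theorem relE4F1 : ⁅DE4, DF1⁆ = 0 := by
  apply derivation_eq_of_x
  intro r hr1 hr2
  interval_cases r <;>
    simp [Derivation.commutator_apply, Derivation.neg_apply, Derivation.smul_apply, Derivation.zero_apply, DE4_x, DF1_x, wE4, wF1, Dmul2, smul2, Dtwo0] <;> try ring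

set_option maxHeartbeats 2000000 in
theorem relH4H2 : ⁅DH4, DH2⁆ = 0 := by
  apply derivation_eq_of_x
  intro r hr1 hr2
  interval_cases r <;>
    simp [Derivation.commutator_apply, Derivation.neg_apply, Derivation.smul_apply, Derivation.zero_apply, DH4_x, DH2_x, wH4, wH2, Dmul2, smul2, Dtwo0] <;> try ring

set_option maxHeartbeats 2000000 in
theorem relH4E2 : ⁅DH4, DE2⁆ = 0 := by
  apply derivation_eq_of_x
  intro r hr1 hr2
  interval_cases r <;>
    simp [Derivation.commutator_apply, Derivation.neg_apply, Derivation.smul_apply, Derivation.zero_apply, DH4_x, DE2_x, wH4, wE2, Dmul2, smul2, Dtwo0] <;> try ring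

set_option maxHeartbeats 2000000 in
theorem relH4F2 : ⁅DH4, DF2⁆ = 0 := by
  apply derivation_eq_of_x
  intro r hr1 hr2
  interval_cases r <;>
    simp [Derivation.commutator_apply, Derivation.neg_apply, Derivation.smul_apply, Derivation.zero_apply, DH4_x, DF2_x, wH4, wF2, Dmul2, smul2, Dtwo0] <;> try ring

set_option maxHeartbeats 2000000 in
theorem relE4F2 : ⁅DE4, DF2⁆ = 0 := by
  apply derivation_eq_of_x
  intro r hr1 hr2
  interval_cases r <;>
    simp [Derivation.commutator_apply, Derivation.neg_apply, Derivation.smul_apply, Derivation.zero_apply, DE4_x, DF2_x, wE4, wF2, Dmul2, smul2, Dtwo0] <;> try ring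

set_option maxHeartbeats 2000000 in
theorem relH4H3 : ⁅DH4, DH3⁆ = 0 := by
  apply derivation_eq_of_x
  intro r hr1 hr2
  interval_cases r <;>
    simp [Derivation.commutator_apply, Derivation.neg_apply, Derivation.smul_apply, Derivation.zero_apply, DH4_x, DH3_x, wH4, wH3, Dmul2, smul2, Dtwo0] <;> try ring

set_option maxHeartbeats 2000000 in
theorem relH4E3 : ⁅DH4, DE3⁆ = -DE3 := by
  apply derivation_eq_of_x
  intro r hr1 hr2
  interval_cases r <;>
    simp [Derivation.commutator_apply, Derivation.neg_apply, Derivation.smul_apply, Derivation.zero_apply, DH4_x, DE3_x, wH4, wE3, Dmul2, smul2, Dtwo0] <;> try ring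

set_option maxHeartbeats 2000000 in
theorem relH4F3 : ⁅DH4, DF3⁆ = DF3 := by
  apply derivation_eq_of_x
  intro r hr1 hr2
  interval_cases r <;>
    simp [Derivation.commutator_apply, Derivation.neg_apply, Derivation.smul_apply, Derivation.zero_apply, DH4_x, DF3_x, wH4, wF3, Dmul2, smul2, Dtwo0] <;> try ring

set_option maxHeartbeats 2000000 in
theorem relE4F3 : ⁅DE4, DF3⁆ = 0 := by
  apply derivation_eq_of_x
  intro r hr1 hr2
  interval_cases r <;>
    simp [Derivation.commutator_apply, Derivation.neg_apply, Derivation.smul_apply, Derivation.zero_apply, DE4_x, DF3_x, wE4, wF3, Dmul2, smul2, Dtwo0] <;> try ring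

set_option maxHeartbeats 2000000 in
theorem relH4H4 : ⁅DH4, DH4⁆ = 0 := by
  apply derivation_eq_of_x
  intro r hr1 hr2
  interval_cases r <;>
    simp [Derivation.commutator_apply, Derivation.neg_apply, Derivation.smul_apply, Derivation.zero_apply, DH4_x, wH4, Dmul2, smul2, Dtwo0] <;> try ring

set_option maxHeartbeats 2000000 in
theorem relH4E4 : ⁅DH4, DE4⁆ = (2 : ℂ) • DE4 := by
  apply derivation_eq_of_x
  intro r hr1 hr2
  interval_cases r <;>
    simp [Derivation.commutator_apply, Derivation.neg_apply, Derivation.smul_apply, Derivation.zero_apply, DH4_x, DE4_x, wH4, wE4, Dmul2, smul2, Dtwo0] <;> try ring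

set_option maxHeartbeats 2000000 in
theorem relH4F4 : ⁅DH4, DF4⁆ = -((2 : ℂ) • DF4) := by
  apply derivation_eq_of_x
  intro r hr1 hr2
  interval_cases r <;>
    simp [Derivation.commutator_apply, Derivation.neg_apply, Derivation.smul_apply, Derivation.zero_apply, DH4_x, DF4_x, wH4, wF4, Dmul2, smul2, Dtwo0] <;> try ring

set_option maxHeartbeats 2000000 in
theorem relE4F4 : ⁅DE4, DF4⁆ = -DH4 := by
  apply derivation_eq_of_x
  intro r hr1 hr2
  interval_cases r <;>
    simp [Derivation.commutator_apply, Derivation.neg_apply, Derivation.smul_apply, Derivation.zero_apply, DE4_x, DF4_x, wE4, wF4, Dmul2, smul2, Dtwo0, DH4_x, wH4] <;> try ring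

theorem comm_pt {P Q : A → A} {DP DQ : Derivation ℂ A A}
    (hP : ∀ g, P g = DP g) (hQ : ∀ g, Q g = DQ g) (f : A) :
    P (Q f) - Q (P f) = ⁅DP, DQ⁆ f := by
  rw [hQ f, hP (DQ f), hP f, hQ (DP f), Derivation.commutator_apply]

set_option maxHeartbeats 2000000 in
theorem E1_eq (f : A) : E1 f = DE1 f := by
  rw [derivation_apply DE1 f]
  simp [DE1_x, wE1, E1]
  ring

set_option maxHeartbeats 2000000 in
theorem E2_eq (f : A) : E2 f = DE2 f := by
  rw [derivation_apply DE2 f]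
  simp [DE2_x, wE2, E2]
  ring

set_option maxHeartbeats 2000000 in
theorem E3_eq (f : A) : E3 f = DE3 f := by
  rw [derivation_apply DE3 f]
  simp [DE3_x, wE3, E3]
  ring

set_option maxHeartbeats 2000000 in
theorem E4_eq (f : A) : E4 f = DE4 f := by
  rw [derivation_apply DE4 f]
  simp [DE4_x, wE4, E4]
  ring

set_option maxHeartbeats 2000000 in
theorem F1_eq (f : A) : F1 f = DF1 f := by
  rw [derivation_apply DF1 f]
  simp [DF1_x, wF1, F1]
  ring

set_option maxHeartbeats 2000000 in
theorem F2_eq (f : A) : F2 f = DF2 f := by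
  rw [derivation_apply DF2 f]
  simp [DF2_x, wF2, F2]
  ring

set_option maxHeartbeats 2000000 in
theorem F3_eq (f : A) : F3 f = DF3 f := by
  rw [derivation_apply DF3 f]
  simp [DF3_x, wF3, F3]
  ring

set_option maxHeartbeats 2000000 in
theorem F4_eq (f : A) : F4 f = DF4 f := by
  rw [derivation_apply DF4 f]
  simp [DF4_x, wF4, F4]
  ring

set_option maxHeartbeats 2000000 in
theorem H1_eq (f : A) : H1 f = DH1 f := by
  rw [derivation_apply DH1 f]
  simp [DH1_x, wH1, H1]
  ring

set_option maxHeartbeats 2000000 in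
theorem H2_eq (f : A) : H2 f = DH2 f := by
  rw [derivation_apply DH2 f]
  simp [DH2_x, wH2, H2]
  ring

set_option maxHeartbeats 2000000 in
theorem H3_eq (f : A) : H3 f = DH3 f := by
  rw [derivation_apply DH3 f]
  simp [DH3_x, wH3, H3]
  ring

set_option maxHeartbeats 2000000 in
theorem H4_eq (f : A) : H4 f = DH4 f := by
  rw [derivation_apply DH4 f]
  simp [DH4_x, wH4, H4]
  ring

set_option maxHeartbeats 8000000 in
/-- the twelve operators satisfy the Chevalley relations of `F_4`. -/
theorem stmt18 : ∀ i j : Fin 4, ∀ f : A,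
    (Hop i (Hop j f) - Hop j (Hop i f) = 0) ∧
    (Hop i (Eop j f) - Eop j (Hop i f) = (c i j : ℂ) • Eop j f) ∧
    (Hop i (Fop j f) - Fop j (Hop i f) = -((c i j : ℂ) • Fop j f)) ∧
    (i = j → Eop i (Fop j f) - Fop j (Eop i f) = -Hop i f) ∧
    (i ≠ j → Eop i (Fop j f) - Fop j (Eop i f) = 0) := by
  intro i j f
  fin_cases i <;> fin_cases j
  · refine ⟨?_, ?_, ?_, fun h => ?_, fun h => ?_⟩
    · show H1 (H1 f) - H1 (H1 f) = 0
      rw [comm_pt H1_eq H1_eq, relH1H1]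
      simp
    · show H1 (E1 f) - E1 (H1 f) = ((c 0 0 : ℤ) : ℂ) • E1 f
      rw [comm_pt H1_eq E1_eq, relH1E1, show (c 0 0 : ℤ) = 2 from rfl]
      simp [E1_eq, smul2]
      try ring
    · show H1 (F1 f) - F1 (H1 f) = -(((c 0 0 : ℤ) : ℂ) • F1 f)
      rw [comm_pt H1_eq F1_eq, relH1F1, show (c 0 0 : ℤ) = 2 from rfl]
      simp [F1_eq, smul2]
      try ring
    · show E1 (F1 f) - F1 (E1 f) = -H1 f
      rw [comm_pt E1_eq F1_eq, relE1F1]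
      simp [H1_eq]
    · exact absurd rfl h
  · refine ⟨?_, ?_, ?_, fun h => ?_, fun h => ?_⟩
    · show H1 (H2 f) - H2 (H1 f) = 0
      rw [comm_pt H1_eq H2_eq, relH1H2]
      simp
    · show H1 (E2 f) - E2 (H1 f) = ((c 0 1 : ℤ) : ℂ) • E2 f
      rw [comm_pt H1_eq E2_eq, relH1E2, show (c 0 1 : ℤ) = -1 from rfl]
      simp [E2_eq, smul2]
      try ring
    · show H1 (F2 f) - F2 (H1 f) = -(((c 0 1 : ℤ) : ℂ) • F2 f)
      rw [comm_pt H1_eq F2_eq, relH1F2, show (c 0 1 : ℤ) = -1 from rfl]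
      simp [F2_eq, smul2]
      try ring
    · exact absurd h (by decide)
    · show E1 (F2 f) - F2 (E1 f) = 0
      rw [comm_pt E1_eq F2_eq, relE1F2]
      simp
  · refine ⟨?_, ?_, ?_, fun h => ?_, fun h => ?_⟩
    · show H1 (H3 f) - H3 (H1 f) = 0
      rw [comm_pt H1_eq H3_eq, relH1H3]
      simp
    · show H1 (E3 f) - E3 (H1 f) = ((c 0 2 : ℤ) : ℂ) • E3 f
      rw [comm_pt H1_eq E3_eq, relH1E3, show (c 0 2 : ℤ) = 0 from rfl]
      simp [E3_eq, smul2]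
      try ring
    · show H1 (F3 f) - F3 (H1 f) = -(((c 0 2 : ℤ) : ℂ) • F3 f)
      rw [comm_pt H1_eq F3_eq, relH1F3, show (c 0 2 : ℤ) = 0 from rfl]
      simp [F3_eq, smul2]
      try ring
    · exact absurd h (by decide)
    · show E1 (F3 f) - F3 (E1 f) = 0
      rw [comm_pt E1_eq F3_eq, relE1F3]
      simp
  · refine ⟨?_, ?_, ?_, fun h => ?_, fun h => ?_⟩
    · show H1 (H4 f) - H4 (H1 f) = 0
      rw [comm_pt H1_eq H4_eq, relH1H4]
      simp
    · show H1 (E4 f) - E4 (H1 f) = ((c 0 3 : ℤ) : ℂ) • E4 f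
      rw [comm_pt H1_eq E4_eq, relH1E4, show (c 0 3 : ℤ) = 0 from rfl]
      simp [E4_eq, smul2]
      try ring
    · show H1 (F4 f) - F4 (H1 f) = -(((c 0 3 : ℤ) : ℂ) • F4 f)
      rw [comm_pt H1_eq F4_eq, relH1F4, show (c 0 3 : ℤ) = 0 from rfl]
      simp [F4_eq, smul2]
      try ring
    · exact absurd h (by decide)
    · show E1 (F4 f) - F4 (E1 f) = 0
      rw [comm_pt E1_eq F4_eq, relE1F4]
      simp
  · refine ⟨?_, ?_, ?_, fun h => ?_, fun h => ?_⟩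
    · show H2 (H1 f) - H1 (H2 f) = 0
      rw [comm_pt H2_eq H1_eq, relH2H1]
      simp
    · show H2 (E1 f) - E1 (H2 f) = ((c 1 0 : ℤ) : ℂ) • E1 f
      rw [comm_pt H2_eq E1_eq, relH2E1, show (c 1 0 : ℤ) = -1 from rfl]
      simp [E1_eq, smul2]
      try ring
    · show H2 (F1 f) - F1 (H2 f) = -(((c 1 0 : ℤ) : ℂ) • F1 f)
      rw [comm_pt H2_eq F1_eq, relH2F1, show (c 1 0 : ℤ) = -1 from rfl]
      simp [F1_eq, smul2]
      try ring
    · exact absurd h (by decide)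
    · show E2 (F1 f) - F1 (E2 f) = 0
      rw [comm_pt E2_eq F1_eq, relE2F1]
      simp
  · refine ⟨?_, ?_, ?_, fun h => ?_, fun h => ?_⟩
    · show H2 (H2 f) - H2 (H2 f) = 0
      rw [comm_pt H2_eq H2_eq, relH2H2]
      simp
    · show H2 (E2 f) - E2 (H2 f) = ((c 1 1 : ℤ) : ℂ) • E2 f
      rw [comm_pt H2_eq E2_eq, relH2E2, show (c 1 1 : ℤ) = 2 from rfl]
      simp [E2_eq, smul2]
      try ring
    · show H2 (F2 f) - F2 (H2 f) = -(((c 1 1 : ℤ) : ℂ) • F2 f)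
      rw [comm_pt H2_eq F2_eq, relH2F2, show (c 1 1 : ℤ) = 2 from rfl]
      simp [F2_eq, smul2]
      try ring
    · show E2 (F2 f) - F2 (E2 f) = -H2 f
      rw [comm_pt E2_eq F2_eq, relE2F2]
      simp [H2_eq]
    · exact absurd rfl h
  · refine ⟨?_, ?_, ?_, fun h => ?_, fun h => ?_⟩
    · show H2 (H3 f) - H3 (H2 f) = 0
      rw [comm_pt H2_eq H3_eq, relH2H3]
      simp
    · show H2 (E3 f) - E3 (H2 f) = ((c 1 2 : ℤ) : ℂ) • E3 f
      rw [comm_pt H2_eq E3_eq, relH2E3, show (c 1 2 : ℤ) = -1 from rfl]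
      simp [E3_eq, smul2]
      try ring
    · show H2 (F3 f) - F3 (H2 f) = -(((c 1 2 : ℤ) : ℂ) • F3 f)
      rw [comm_pt H2_eq F3_eq, relH2F3, show (c 1 2 : ℤ) = -1 from rfl]
      simp [F3_eq, smul2]
      try ring
    · exact absurd h (by decide)
    · show E2 (F3 f) - F3 (E2 f) = 0
      rw [comm_pt E2_eq F3_eq, relE2F3]
      simp
  · refine ⟨?_, ?_, ?_, fun h => ?_, fun h => ?_⟩
    · show H2 (H4 f) - H4 (H2 f) = 0
      rw [comm_pt H2_eq H4_eq, relH2H4]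
      simp
    · show H2 (E4 f) - E4 (H2 f) = ((c 1 3 : ℤ) : ℂ) • E4 f
      rw [comm_pt H2_eq E4_eq, relH2E4, show (c 1 3 : ℤ) = 0 from rfl]
      simp [E4_eq, smul2]
      try ring
    · show H2 (F4 f) - F4 (H2 f) = -(((c 1 3 : ℤ) : ℂ) • F4 f)
      rw [comm_pt H2_eq F4_eq, relH2F4, show (c 1 3 : ℤ) = 0 from rfl]
      simp [F4_eq, smul2]
      try ring
    · exact absurd h (by decide)
    · show E2 (F4 f) - F4 (E2 f) = 0
      rw [comm_pt E2_eq F4_eq, relE2F4]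
      simp
  · refine ⟨?_, ?_, ?_, fun h => ?_, fun h => ?_⟩
    · show H3 (H1 f) - H1 (H3 f) = 0
      rw [comm_pt H3_eq H1_eq, relH3H1]
      simp
    · show H3 (E1 f) - E1 (H3 f) = ((c 2 0 : ℤ) : ℂ) • E1 f
      rw [comm_pt H3_eq E1_eq, relH3E1, show (c 2 0 : ℤ) = 0 from rfl]
      simp [E1_eq, smul2]
      try ring
    · show H3 (F1 f) - F1 (H3 f) = -(((c 2 0 : ℤ) : ℂ) • F1 f)
      rw [comm_pt H3_eq F1_eq, relH3F1, show (c 2 0 : ℤ) = 0 from rfl]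
      simp [F1_eq, smul2]
      try ring
    · exact absurd h (by decide)
    · show E3 (F1 f) - F1 (E3 f) = 0
      rw [comm_pt E3_eq F1_eq, relE3F1]
      simp
  · refine ⟨?_, ?_, ?_, fun h => ?_, fun h => ?_⟩
    · show H3 (H2 f) - H2 (H3 f) = 0
      rw [comm_pt H3_eq H2_eq, relH3H2]
      simp
    · show H3 (E2 f) - E2 (H3 f) = ((c 2 1 : ℤ) : ℂ) • E2 f
      rw [comm_pt H3_eq E2_eq, relH3E2, show (c 2 1 : ℤ) = -2 from rfl]
      simp [E2_eq, smul2]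
      try ring
    · show H3 (F2 f) - F2 (H3 f) = -(((c 2 1 : ℤ) : ℂ) • F2 f)
      rw [comm_pt H3_eq F2_eq, relH3F2, show (c 2 1 : ℤ) = -2 from rfl]
      simp [F2_eq, smul2]
      try ring
    · exact absurd h (by decide)
    · show E3 (F2 f) - F2 (E3 f) = 0
      rw [comm_pt E3_eq F2_eq, relE3F2]
      simp
  · refine ⟨?_, ?_, ?_, fun h => ?_, fun h => ?_⟩
    · show H3 (H3 f) - H3 (H3 f) = 0
      rw [comm_pt H3_eq H3_eq, relH3H3]
      simp
    · show H3 (E3 f) - E3 (H3 f) = ((c 2 2 : ℤ) : ℂ) • E3 f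
      rw [comm_pt H3_eq E3_eq, relH3E3, show (c 2 2 : ℤ) = 2 from rfl]
      simp [E3_eq, smul2]
      try ring
    · show H3 (F3 f) - F3 (H3 f) = -(((c 2 2 : ℤ) : ℂ) • F3 f)
      rw [comm_pt H3_eq F3_eq, relH3F3, show (c 2 2 : ℤ) = 2 from rfl]
      simp [F3_eq, smul2]
      try ring
    · show E3 (F3 f) - F3 (E3 f) = -H3 f
      rw [comm_pt E3_eq F3_eq, relE3F3]
      simp [H3_eq]
    · exact absurd rfl h
  · refine ⟨?_, ?_, ?_, fun h => ?_, fun h => ?_⟩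
    · show H3 (H4 f) - H4 (H3 f) = 0
      rw [comm_pt H3_eq H4_eq, relH3H4]
      simp
    · show H3 (E4 f) - E4 (H3 f) = ((c 2 3 : ℤ) : ℂ) • E4 f
      rw [comm_pt H3_eq E4_eq, relH3E4, show (c 2 3 : ℤ) = -1 from rfl]
      simp [E4_eq, smul2]
      try ring
    · show H3 (F4 f) - F4 (H3 f) = -(((c 2 3 : ℤ) : ℂ) • F4 f)
      rw [comm_pt H3_eq F4_eq, relH3F4, show (c 2 3 : ℤ) = -1 from rfl]
      simp [F4_eq, smul2]
      try ring
    · exact absurd h (by decide)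
    · show E3 (F4 f) - F4 (E3 f) = 0
      rw [comm_pt E3_eq F4_eq, relE3F4]
      simp
  · refine ⟨?_, ?_, ?_, fun h => ?_, fun h => ?_⟩
    · show H4 (H1 f) - H1 (H4 f) = 0
      rw [comm_pt H4_eq H1_eq, relH4H1]
      simp
    · show H4 (E1 f) - E1 (H4 f) = ((c 3 0 : ℤ) : ℂ) • E1 f
      rw [comm_pt H4_eq E1_eq, relH4E1, show (c 3 0 : ℤ) = 0 from rfl]
      simp [E1_eq, smul2]
      try ring
    · show H4 (F1 f) - F1 (H4 f) = -(((c 3 0 : ℤ) : ℂ) • F1 f)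
      rw [comm_pt H4_eq F1_eq, relH4F1, show (c 3 0 : ℤ) = 0 from rfl]
      simp [F1_eq, smul2]
      try ring
    · exact absurd h (by decide)
    · show E4 (F1 f) - F1 (E4 f) = 0
      rw [comm_pt E4_eq F1_eq, relE4F1]
      simp
  · refine ⟨?_, ?_, ?_, fun h => ?_, fun h => ?_⟩
    · show H4 (H2 f) - H2 (H4 f) = 0
      rw [comm_pt H4_eq H2_eq, relH4H2]
      simp
    · show H4 (E2 f) - E2 (H4 f) = ((c 3 1 : ℤ) : ℂ) • E2 f
      rw [comm_pt H4_eq E2_eq, relH4E2, show (c 3 1 : ℤ) = 0 from rfl]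
      simp [E2_eq, smul2]
      try ring
    · show H4 (F2 f) - F2 (H4 f) = -(((c 3 1 : ℤ) : ℂ) • F2 f)
      rw [comm_pt H4_eq F2_eq, relH4F2, show (c 3 1 : ℤ) = 0 from rfl]
      simp [F2_eq, smul2]
      try ring
    · exact absurd h (by decide)
    · show E4 (F2 f) - F2 (E4 f) = 0
      rw [comm_pt E4_eq F2_eq, relE4F2]
      simp
  · refine ⟨?_, ?_, ?_, fun h => ?_, fun h => ?_⟩
    · show H4 (H3 f) - H3 (H4 f) = 0
      rw [comm_pt H4_eq H3_eq, relH4H3]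
      simp
    · show H4 (E3 f) - E3 (H4 f) = ((c 3 2 : ℤ) : ℂ) • E3 f
      rw [comm_pt H4_eq E3_eq, relH4E3, show (c 3 2 : ℤ) = -1 from rfl]
      simp [E3_eq, smul2]
      try ring
    · show H4 (F3 f) - F3 (H4 f) = -(((c 3 2 : ℤ) : ℂ) • F3 f)
      rw [comm_pt H4_eq F3_eq, relH4F3, show (c 3 2 : ℤ) = -1 from rfl]
      simp [F3_eq, smul2]
      try ring
    · exact absurd h (by decide)
    · show E4 (F3 f) - F3 (E4 f) = 0
      rw [comm_pt E4_eq F3_eq, relE4F3]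
      simp
  · refine ⟨?_, ?_, ?_, fun h => ?_, fun h => ?_⟩
    · show H4 (H4 f) - H4 (H4 f) = 0
      rw [comm_pt H4_eq H4_eq, relH4H4]
      simp
    · show H4 (E4 f) - E4 (H4 f) = ((c 3 3 : ℤ) : ℂ) • E4 f
      rw [comm_pt H4_eq E4_eq, relH4E4, show (c 3 3 : ℤ) = 2 from rfl]
      simp [E4_eq, smul2]
      try ring
    · show H4 (F4 f) - F4 (H4 f) = -(((c 3 3 : ℤ) : ℂ) • F4 f)
      rw [comm_pt H4_eq F4_eq, relH4F4, show (c 3 3 : ℤ) = 2 from rfl]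
      simp [F4_eq, smul2]
      try ring
    · show E4 (F4 f) - F4 (E4 f) = -H4 f
      rw [comm_pt E4_eq F4_eq, relE4F4]
      simp [H4_eq]
    · exact absurd rfl h
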